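/- arXiv:1504.05147 — 6 statements merged into one kernel-verified Lean document; each statement's English description precedes it below -/
import Mathlib

section
/- Let X be a finite random variable with distribution p(x), let r_x ∈ ℝ^n with ‖r_x‖ ≤ R, and let a measurement be given by effects e_y = γ_y (1, m_y) with γ_y ∈ [0,1], m_y ∈ ℝ^n, ‖m_y‖ ≤ M, satisfying ∑_y γ_y = 1 and ∑_y γ_y m_y = 0, and outcome probabilities p(y|x) = γ_y (1 + m_y · r_x) ≥ 0. Then the mutual information between X and the outcome Y satisfies I(X:Y) ≤ max_{x,y} log₂(1 + m_y · r_x) ≤ log₂(1 + M R). -/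
open Real

/-- Mutual information (in bits) between input `X` with distribution `p` and the
measurement outcome `Y` with conditional distribution `q x y = p(y|x)`:
`I(X:Y) = ∑_{x,y} p(x) p(y|x) log₂( p(y|x) / p(y) )`, `p(y) = ∑_x p(x) p(y|x)`. -/
noncomputable def mutInfo {X Y : Type*} [Fintype X] [Fintype Y]
    (p : X → ℝ) (q : X → Y → ℝ) : ℝ :=
  ∑ x, ∑ y, p x * q x y * Real.logb 2 (q x y / (∑ x', p x' * q x' y))

/-- Proposition 1 (classical-capacity bound): for encodings `r_x` with `‖r_x‖ ≤ R`
and measurement effects `e_y = γ_y (1, m_y)` with `γ_y ∈ [0,1]`, `‖m_y‖ ≤ M`,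
`∑ γ_y = 1`, `∑ γ_y m_y = 0`, and `p(y|x) = γ_y (1 + m_y·r_x) ≥ 0`, one has
`I(X:Y) ≤ max_{x,y} log₂(1 + m_y·r_x) ≤ log₂(1 + M R)`. -/
theorem stmt5 (n : ℕ) {X Y : Type*} [Fintype X] [Fintype Y] [Nonempty X] [Nonempty Y]
    (p : X → ℝ) (r : X → EuclideanSpace ℝ (Fin n))
    (γ : Y → ℝ) (m : Y → EuclideanSpace ℝ (Fin n)) (M R : ℝ)
    (hp : ∀ x, 0 ≤ p x) (hp1 : ∑ x, p x = 1)
    (hγ : ∀ y, 0 ≤ γ y ∧ γ y ≤ 1)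
    (hγ1 : ∑ y, γ y = 1)
    (hγm : ∀ i, ∑ y, γ y * m y i = 0)
    (hR : ∀ x, ‖r x‖ ≤ R) (hM : ∀ y, ‖m y‖ ≤ M)
    (hpos : ∀ x y, 0 ≤ γ y * (1 + ∑ i, m y i * r x i)) :
    mutInfo p (fun x y => γ y * (1 + ∑ i, m y i * r x i)) ≤
      (Finset.univ : Finset (X × Y)).sup' Finset.univ_nonempty
        (fun z => Real.logb 2 (1 + ∑ i, m z.2 i * r z.1 i)) ∧
    (Finset.univ : Finset (X × Y)).sup' Finset.univ_nonempty
        (fun z => Real.logb 2 (1 + ∑ i, m z.2 i * r z.1 i)) ≤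
      Real.logb 2 (1 + M * R) := by
  have hRnn : 0 ≤ R := le_trans (norm_nonneg _) (hR (Classical.arbitrary X))
  have hMnn : 0 ≤ M := le_trans (norm_nonneg _) (hM (Classical.arbitrary Y))
  -- Cauchy–Schwarz: |m_y · r_x| ≤ M * R
  have habs : ∀ x y, |∑ i, m y i * r x i| ≤ M * R := by
    intro x y
    have h2 : (inner ℝ (m y) (r x) : ℝ) = ∑ i, m y i * r x i := by
      simp [PiLp.inner_apply, RCLike.inner_apply, conj_trivial, mul_comm]
    calc |∑ i, m y i * r x i| = |(inner ℝ (m y) (r x) : ℝ)| := by rw [h2]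
      _ ≤ ‖m y‖ * ‖r x‖ := abs_real_inner_le_norm _ _
      _ ≤ M * R := mul_le_mul (hM y) (hR x) (norm_nonneg _)
          (le_trans (norm_nonneg _) (hM y))
  set L : ℝ := (Finset.univ : Finset (X × Y)).sup' Finset.univ_nonempty
        (fun z => Real.logb 2 (1 + ∑ i, m z.2 i * r z.1 i)) with hL
  constructor
  · -- main bound
    set q : X → Y → ℝ := fun x y => γ y * (1 + ∑ i, m y i * r x i) with hqdef
    have hq0 : ∀ x y, 0 ≤ q x y := hpos
    -- each row of q sums to 1
    have hrow : ∀ x, ∑ y, q x y = 1 := by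
      intro x
      have : ∑ y, q x y = (∑ y, γ y) + ∑ i, (∑ y, γ y * m y i) * r x i := by
        simp only [hqdef, mul_add, mul_one, Finset.sum_add_distrib, Finset.mul_sum]
        congr 1
        rw [Finset.sum_comm]
        congr 1; ext i
        rw [Finset.sum_mul]
        congr 1; ext y; ring
      simp [this, hγ1, hγm]
    have hsum2 : ∑ x, ∑ y, p x * q x y = 1 := by
      have : ∀ x, ∑ y, p x * q x y = p x := by
        intro x; rw [← Finset.mul_sum, hrow, mul_one]
      simp [this, hp1]
    have hpYnn : ∀ y, 0 ≤ ∑ x', p x' * q x' y := by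
      intro y
      exact Finset.sum_nonneg fun x _ => mul_nonneg (hp x) (hq0 x y)
    have hpYsum : ∑ y, ∑ x', p x' * q x' y = 1 := by
      rw [Finset.sum_comm]; exact hsum2
    have hlog2 : (0:ℝ) < Real.log 2 := Real.log_pos one_lt_two
    -- step 2: termwise bound by L
    have step2 : ∀ x y, p x * q x y * Real.logb 2 (1 + ∑ i, m y i * r x i)
        ≤ p x * q x y * L := by
      intro x y
      rcases eq_or_lt_of_le (mul_nonneg (hp x) (hq0 x y)) with h | h
      · rw [← h]; simp
      · refine mul_le_mul_of_nonneg_left ?_ h.le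
        exact Finset.le_sup' (fun z : X × Y => Real.logb 2 (1 + ∑ i, m z.2 i * r z.1 i))
          (Finset.mem_univ ((x, y) : X × Y))
    -- step 1: per-outcome bound
    have step1 : ∀ y, (∑ x, p x * q x y * Real.logb 2 (q x y / ∑ x', p x' * q x' y))
        ≤ (∑ x, p x * q x y * Real.logb 2 (1 + ∑ i, m y i * r x i))
          + (γ y - ∑ x', p x' * q x' y) / Real.log 2 := by
      intro y
      rcases eq_or_lt_of_le (hγ y).1 with hγ0 | hγpos
      · have hq0' : ∀ x, q x y = 0 := by intro x; simp [hqdef, ← hγ0]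
        simp [hq0', ← hγ0]
      rcases eq_or_lt_of_le (hpYnn y) with hpY0 | hpYpos
      · have hz : ∀ x, p x * q x y = 0 := by
          intro x
          have := (Finset.sum_eq_zero_iff_of_nonneg
            (fun x _ => mul_nonneg (hp x) (hq0 x y))).mp hpY0.symm
          exact this x (Finset.mem_univ x)
        have e1 : (∑ x, p x * q x y * Real.logb 2 (q x y / ∑ x', p x' * q x' y)) = 0 :=
          Finset.sum_eq_zero fun x _ => by rw [hz x, zero_mul]
        have e2 : (∑ x, p x * q x y * Real.logb 2 (1 + ∑ i, m y i * r x i)) = 0 :=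
          Finset.sum_eq_zero fun x _ => by rw [hz x, zero_mul]
        rw [e1, e2, ← hpY0]
        simp only [zero_add, sub_zero]
        exact div_nonneg (hγ y).1 hlog2.le
      · -- γ y > 0, pY y > 0
        have hγne : γ y ≠ 0 := ne_of_gt hγpos
        have hpYne : (∑ x', p x' * q x' y) ≠ 0 := ne_of_gt hpYpos
        have key : ∀ x, p x * q x y * Real.logb 2 (q x y / ∑ x', p x' * q x' y)
            = p x * q x y * Real.logb 2 (1 + ∑ i, m y i * r x i)
              + (p x * q x y) * Real.logb 2 (γ y / ∑ x', p x' * q x' y) := by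
          intro x
          rcases eq_or_ne (p x * q x y) 0 with h | h
          · rw [h]; ring
          · have hqne : q x y ≠ 0 := fun hc => h (by rw [hc, mul_zero])
            have e2 : (1 : ℝ) + ∑ i, m y i * r x i = q x y / γ y := by
              field_simp [hqdef]
              simp only [hqdef]; ring
            rw [Real.logb_div hqne hpYne, e2, Real.logb_div hqne hγne,
              Real.logb_div hγne hpYne]
            ring
        rw [Finset.sum_congr rfl fun x _ => key x, Finset.sum_add_distrib,
          ← Finset.sum_mul]
        have hbd : (∑ x, p x * q x y) * Real.logb 2 (γ y / ∑ x', p x' * q x' y)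
            ≤ (γ y - ∑ x', p x' * q x' y) / Real.log 2 := by
          have hlog := Real.log_le_sub_one_of_pos (div_pos hγpos hpYpos)
          have h1 : (∑ x, p x * q x y) * Real.log (γ y / ∑ x', p x' * q x' y)
              ≤ γ y - ∑ x', p x' * q x' y := by
            calc (∑ x, p x * q x y) * Real.log (γ y / ∑ x', p x' * q x' y)
                ≤ (∑ x, p x * q x y) * (γ y / ∑ x', p x' * q x' y - 1) :=
                  mul_le_mul_of_nonneg_left hlog (hpYnn y)
              _ = γ y - ∑ x', p x' * q x' y := by
                  field_simp
          rw [Real.logb]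
          calc (∑ x, p x * q x y) * (Real.log (γ y / ∑ x', p x' * q x' y) / Real.log 2)
              = ((∑ x, p x * q x y) * Real.log (γ y / ∑ x', p x' * q x' y)) / Real.log 2 := by
                ring
            _ ≤ (γ y - ∑ x', p x' * q x' y) / Real.log 2 := by gcongr
        linarith
    -- assemble
    show mutInfo p q ≤ L
    unfold mutInfo
    calc ∑ x, ∑ y, p x * q x y * Real.logb 2 (q x y / ∑ x', p x' * q x' y)
        = ∑ y, ∑ x, p x * q x y * Real.logb 2 (q x y / ∑ x', p x' * q x' y) :=
          Finset.sum_comm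
      _ ≤ ∑ y, ((∑ x, p x * q x y * Real.logb 2 (1 + ∑ i, m y i * r x i))
            + (γ y - ∑ x', p x' * q x' y) / Real.log 2) :=
          Finset.sum_le_sum fun y _ => step1 y
      _ = (∑ y, ∑ x, p x * q x y * Real.logb 2 (1 + ∑ i, m y i * r x i))
            + (∑ y, (γ y - ∑ x', p x' * q x' y)) / Real.log 2 := by
          rw [Finset.sum_add_distrib, Finset.sum_div]
      _ = ∑ y, ∑ x, p x * q x y * Real.logb 2 (1 + ∑ i, m y i * r x i) := by
          rw [Finset.sum_sub_distrib, hγ1, hpYsum]; simp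
      _ ≤ ∑ y, ∑ x, p x * q x y * L :=
          Finset.sum_le_sum fun y _ => Finset.sum_le_sum fun x _ => step2 x y
      _ = (∑ y, ∑ x, p x * q x y) * L := by
          rw [Finset.sum_mul]
          exact Finset.sum_congr rfl fun y _ => (Finset.sum_mul _ _ _).symm
      _ = L := by rw [Finset.sum_comm, hsum2, one_mul]
  · -- second bound
    rw [hL]
    apply Finset.sup'_le
    intro z _
    obtain ⟨x, y⟩ := z
    have hMR : (0:ℝ) < 1 + M * R := by nlinarith
    have h1 : |1 + ∑ i, m y i * r x i| ≤ 1 + M * R := by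
      have := habs x y
      rw [abs_le] at *
      constructor <;> nlinarith [this.1, this.2]
    rcases eq_or_ne (1 + ∑ i, m y i * r x i) 0 with h0 | h0
    · rw [h0, Real.logb_zero]
      exact Real.logb_nonneg one_lt_two (by nlinarith)
    · rw [← Real.logb_abs]
      exact Real.logb_le_logb_of_le one_lt_two (abs_pos.mpr h0) h1
end

section
/- The classical capacity of a hypersphere theory of any dimension n is exactly 1 bit: there exists an encoding into states of the n-ball and a two-outcome measurement achieving mutual information 1, and no encoding/measurement achieves more than 1 bit. -/
open scoped RealInnerProductSpace


lemma dot_abs_le {n : ℕ} (m r : EuclideanSpace ℝ (Fin n)) (hm : ‖m‖ ≤ 1) (hr : ‖r‖ ≤ 1) :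
    |∑ i, m i * r i| ≤ 1 := by
  have h : ⟪m, r⟫ = ∑ i, m i * r i := by
    simp [PiLp.inner_apply, RCLike.inner_apply, mul_comm]
  rw [← h]
  calc |⟪m, r⟫| ≤ ‖m‖ * ‖r‖ := abs_real_inner_le_norm m r
    _ ≤ 1 := by nlinarith [norm_nonneg m, norm_nonneg r]

lemma upper {n : ℕ} (X Y : Type) [Fintype X] [Fintype Y]
    (p : X → ℝ) (r : X → EuclideanSpace ℝ (Fin n))
    (γ : Y → ℝ) (m : Y → EuclideanSpace ℝ (Fin n))
    (hp : ∀ x, 0 ≤ p x) (hps : ∑ x, p x = 1)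
    (hr : ∀ x, ‖r x‖ ≤ 1)
    (hγ : ∀ y, 0 ≤ γ y ∧ γ y ≤ 1) (hγs : ∑ y, γ y = 1)
    (hms : ∀ i, ∑ y, γ y * m y i = 0) (hm : ∀ y, ‖m y‖ ≤ 1) :
    mutInfo p (fun x y => γ y * (1 + ∑ i, m y i * r x i)) ≤ 1 := by
  set q : X → Y → ℝ := fun x y => γ y * (1 + ∑ i, m y i * r x i) with hq
  set qb : Y → ℝ := fun y => ∑ x, p x * q x y with hqb
  have hd : ∀ x y, |∑ i, m y i * r x i| ≤ 1 := fun x y => dot_abs_le _ _ (hm y) (hr x)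
  have hq0 : ∀ x y, 0 ≤ q x y := by
    intro x y
    have h1 := abs_le.1 (hd x y)
    have h2 := (hγ y).1
    simp only [hq]
    nlinarith [h1.1, h1.2]
  have hq2 : ∀ x y, q x y ≤ 2 * γ y := by
    intro x y
    have h1 := abs_le.1 (hd x y)
    have h2 := (hγ y).1
    simp only [hq]
    nlinarith [h1.1, h1.2]
  have hqrow : ∀ x, ∑ y, q x y = 1 := by
    intro x
    simp only [hq]
    have h1 : ∀ y ∈ Finset.univ, γ y * (1 + ∑ i, m y i * r x i)
        = γ y + ∑ i, (γ y * m y i) * r x i := by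
      intro y _
      rw [mul_add, mul_one, Finset.mul_sum]
      ring_nf
    rw [Finset.sum_congr rfl h1, Finset.sum_add_distrib, hγs, Finset.sum_comm]
    have h2 : ∀ i ∈ Finset.univ, ∑ y, (γ y * m y i) * r x i = 0 := by
      intro i _
      rw [← Finset.sum_mul, hms i, zero_mul]
    rw [Finset.sum_congr rfl h2]
    simp
  have hqb0 : ∀ y, 0 ≤ qb y := fun y =>
    Finset.sum_nonneg fun x _ => mul_nonneg (hp x) (hq0 x y)
  have hqb2 : ∀ y, qb y ≤ 2 * γ y := by
    intro y
    calc qb y ≤ ∑ x, p x * (2 * γ y) :=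
          Finset.sum_le_sum fun x _ => mul_le_mul_of_nonneg_left (hq2 x y) (hp x)
      _ = 2 * γ y := by rw [← Finset.sum_mul, hps, one_mul]
  have hqbs : ∑ y, qb y = 1 := by
    simp only [hqb]
    rw [Finset.sum_comm]
    have : ∀ x ∈ Finset.univ, ∑ y, p x * q x y = p x := by
      intro x _
      rw [← Finset.mul_sum, hqrow, mul_one]
    rw [Finset.sum_congr rfl this, hps]
  have key : ∀ x y, p x * q x y * Real.logb 2 (q x y / qb y)
      ≤ p x * q x y * (1 + Real.logb 2 (γ y / qb y)) := by
    intro x y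
    rcases eq_or_lt_of_le (mul_nonneg (hp x) (hq0 x y)) with h | h
    · rw [← h]; simp
    · have hpx : 0 < p x := lt_of_le_of_ne (hp x) (by
        intro e; rw [← e] at h; simp at h)
      have hqxy : 0 < q x y := by nlinarith [hq0 x y]
      have hqbpos : 0 < qb y := by
        have : p x * q x y ≤ qb y :=
          Finset.single_le_sum (fun x' _ => mul_nonneg (hp x') (hq0 x' y)) (Finset.mem_univ x)
        linarith
      have hγpos : 0 < γ y := by nlinarith [hq2 x y]
      have hmono : Real.logb 2 (q x y / qb y) ≤ Real.logb 2 (2 * γ y / qb y) :=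
        Real.logb_le_logb_of_le one_lt_two (div_pos hqxy hqbpos)
          (by gcongr; exact hq2 x y)
      have heq : Real.logb 2 (2 * γ y / qb y) = 1 + Real.logb 2 (γ y / qb y) := by
        rw [mul_div_assoc, Real.logb_mul two_ne_zero (ne_of_gt (div_pos hγpos hqbpos)),
          Real.logb_self_eq_one one_lt_two]
      calc p x * q x y * Real.logb 2 (q x y / qb y)
          ≤ p x * q x y * Real.logb 2 (2 * γ y / qb y) :=
            mul_le_mul_of_nonneg_left hmono (le_of_lt h)
        _ = p x * q x y * (1 + Real.logb 2 (γ y / qb y)) := by rw [heq]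
  have hfold : ∀ y, (∑ x', p x' * q x' y) = qb y := fun _ => rfl
  have step1 : mutInfo p q ≤ ∑ y, qb y * (1 + Real.logb 2 (γ y / qb y)) := by
    unfold mutInfo
    simp only [hfold]
    calc ∑ x, ∑ y, p x * q x y * Real.logb 2 (q x y / qb y)
        ≤ ∑ x, ∑ y, p x * q x y * (1 + Real.logb 2 (γ y / qb y)) :=
          Finset.sum_le_sum fun x _ => Finset.sum_le_sum fun y _ => key x y
      _ = ∑ y, qb y * (1 + Real.logb 2 (γ y / qb y)) := by
          rw [Finset.sum_comm]
          exact Finset.sum_congr rfl fun y _ => by rw [hqb, Finset.sum_mul]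
  have step2 : ∑ y, qb y * (1 + Real.logb 2 (γ y / qb y)) ≤ 1 := by
    have hterm : ∀ y ∈ Finset.univ, qb y * Real.logb 2 (γ y / qb y)
        ≤ (γ y - qb y) / Real.log 2 := by
      intro y _
      have h2 : (0:ℝ) < Real.log 2 := Real.log_pos one_lt_two
      rcases eq_or_lt_of_le (hqb0 y) with h | h
      · rw [← h, zero_mul, sub_zero]
        exact div_nonneg (hγ y).1 h2.le
      · have hγpos : 0 < γ y := by nlinarith [hqb2 y]
        have hlog : Real.log (γ y / qb y) ≤ γ y / qb y - 1 :=
          Real.log_le_sub_one_of_pos (div_pos hγpos h)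
        have hmul : qb y * Real.log (γ y / qb y) ≤ γ y - qb y := by
          have := mul_le_mul_of_nonneg_left hlog h.le
          have hfe : qb y * (γ y / qb y - 1) = γ y - qb y := by
            field_simp
          linarith [hfe ▸ this]
        have e1 : qb y * Real.logb 2 (γ y / qb y)
            = (qb y * Real.log (γ y / qb y)) / Real.log 2 := by
          rw [Real.logb]; ring
        rw [e1]
        exact div_le_div_of_nonneg_right hmul h2.le
    have hsum : ∑ y, qb y * (1 + Real.logb 2 (γ y / qb y))
        = 1 + ∑ y, qb y * Real.logb 2 (γ y / qb y) := by
      simp only [mul_add, mul_one, Finset.sum_add_distrib, hqbs]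
    rw [hsum]
    have : ∑ y, qb y * Real.logb 2 (γ y / qb y) ≤ ∑ y, (γ y - qb y) / Real.log 2 :=
      Finset.sum_le_sum hterm
    have hz : ∑ y, (γ y - qb y) / Real.log 2 = 0 := by
      rw [← Finset.sum_div, Finset.sum_sub_distrib, hγs, hqbs]
      simp
    linarith [hz ▸ this]
  exact le_trans step1 step2


lemma achiev (n : ℕ) (hn : 1 ≤ n) :
    (∃ (p : Fin 2 → ℝ) (r : Fin 2 → EuclideanSpace ℝ (Fin n))
      (γ : Fin 2 → ℝ) (m : Fin 2 → EuclideanSpace ℝ (Fin n)),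
      (∀ x, 0 ≤ p x) ∧ (∑ x, p x = 1) ∧
      (∀ x, ‖r x‖ ≤ 1) ∧
      (∀ y, 0 ≤ γ y ∧ γ y ≤ 1) ∧ (∑ y, γ y = 1) ∧
      (∀ i, ∑ y, γ y * m y i = 0) ∧ (∀ y, ‖m y‖ ≤ 1) ∧
      mutInfo p (fun x y => γ y * (1 + ∑ i, m y i * r x i)) = 1) := by
  set i0 : Fin n := ⟨0, hn⟩
  set v : EuclideanSpace ℝ (Fin n) := EuclideanSpace.single i0 1 with hv
  have hnv : ‖v‖ = 1 := by simp [hv, EuclideanSpace.norm_single]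
  have hvv : ∑ i, v i * v i = 1 := by
    simp [hv, EuclideanSpace.single_apply]
  have hvneg : ∑ i, (-v : EuclideanSpace ℝ (Fin n)) i * v i = -1 := by
    have : ∀ i ∈ Finset.univ, (-v : EuclideanSpace ℝ (Fin n)) i * v i = -(v i * v i) := by
      intro i _; simp
    rw [Finset.sum_congr rfl this, Finset.sum_neg_distrib, hvv]
  have hvneg' : ∑ i, v i * (-v : EuclideanSpace ℝ (Fin n)) i = -1 := by
    have : ∀ i ∈ Finset.univ, v i * (-v : EuclideanSpace ℝ (Fin n)) i = -(v i * v i) := by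
      intro i _; simp
    rw [Finset.sum_congr rfl this, Finset.sum_neg_distrib, hvv]
  have hvneg2 : ∑ i, (-v : EuclideanSpace ℝ (Fin n)) i * (-v : EuclideanSpace ℝ (Fin n)) i = 1 := by
    have : ∀ i ∈ Finset.univ, (-v : EuclideanSpace ℝ (Fin n)) i * (-v : EuclideanSpace ℝ (Fin n)) i = v i * v i := by
      intro i _; simp
    rw [Finset.sum_congr rfl this, hvv]
  refine ⟨fun _ => 1/2, ![v, -v], fun _ => 1/2, ![v, -v], ?_, ?_, ?_, ?_, ?_, ?_, ?_, ?_⟩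
  · intro x; norm_num
  · simp [Fin.sum_univ_two]
  · intro x
    fin_cases x <;> simp [hnv]
  · intro y; norm_num
  · simp [Fin.sum_univ_two]
  · intro i
    simp [Fin.sum_univ_two]
  · intro y
    fin_cases y <;> simp [hnv]
  · unfold mutInfo
    rw [Fin.sum_univ_two]
    simp only [Fin.sum_univ_two, Matrix.cons_val_zero, Matrix.cons_val_one, Matrix.head_cons,
      hvv, hvneg, hvneg', hvneg2]
    norm_num [Real.logb_self_eq_one]

/-- The classical capacity of a hypersphere theory of dimension `n ≥ 1` is exactly `1` bit:
(i) every encoding `x ↦ ω_{r_x}` (states `(1,r)`, `‖r‖ ≤ 1`) and measurement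
`{e_y = γ_y(1,m_y)}` (with `γ_y ∈ [0,1]`, `‖m_y‖ ≤ 1`, `∑ γ_y = 1`, `∑ γ_y m_y = 0`)
gives `I(X:Y) ≤ 1`; (ii) some encoding and two-outcome measurement achieve `I(X:Y) = 1`. -/
theorem stmt7 (n : ℕ) (hn : 1 ≤ n) :
    (∀ (X Y : Type) (_ : Fintype X) (_ : Fintype Y)
      (p : X → ℝ) (r : X → EuclideanSpace ℝ (Fin n))
      (γ : Y → ℝ) (m : Y → EuclideanSpace ℝ (Fin n)),
      (∀ x, 0 ≤ p x) → (∑ x, p x = 1) →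
      (∀ x, ‖r x‖ ≤ 1) →
      (∀ y, 0 ≤ γ y ∧ γ y ≤ 1) → (∑ y, γ y = 1) →
      (∀ i, ∑ y, γ y * m y i = 0) → (∀ y, ‖m y‖ ≤ 1) →
      mutInfo p (fun x y => γ y * (1 + ∑ i, m y i * r x i)) ≤ 1) ∧
    (∃ (p : Fin 2 → ℝ) (r : Fin 2 → EuclideanSpace ℝ (Fin n))
      (γ : Fin 2 → ℝ) (m : Fin 2 → EuclideanSpace ℝ (Fin n)),
      (∀ x, 0 ≤ p x) ∧ (∑ x, p x = 1) ∧
      (∀ x, ‖r x‖ ≤ 1) ∧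
      (∀ y, 0 ≤ γ y ∧ γ y ≤ 1) ∧ (∑ y, γ y = 1) ∧
      (∀ i, ∑ y, γ y * m y i = 0) ∧ (∀ y, ‖m y‖ ≤ 1) ∧
      mutInfo p (fun x y => γ y * (1 + ∑ i, m y i * r x i)) = 1) := by
  constructor
  · intro X Y _ _ p r γ m hp hps hr hγ hγs hms hm
    exact upper X Y p r γ m hp hps hr hγ hγs hms hm
  · exact achiev n hn
end

section
/- For any μ ∈ {0,1}^N and any unit vectors α, β ∈ ℝ^{2^N − 1}, the product effect e_α ⊗ e_β with e_α = (1/2)(1,α), e_β = (1/2)(1,β) applied to the entangled state φ_μ = diag(d_μ) satisfies (e_α ⊗ e_β) · φ_μ = (1/4)(1 + α · T̂_μ β), hence 0 ≤ (e_α ⊗ e_β) · φ_μ ≤ 1/2. In particular φ_μ lies in the maximal tensor product of two hypersphere systems of dimension 2^N − 1. -/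
noncomputable def dVec (N : ℕ) (μ ν : Fin N → ZMod 2) : ℝ :=
  (-1 : ℝ) ^ (∑ l, μ l * ν l : ZMod 2).val

noncomputable def phiMat (N : ℕ) (μ : Fin N → ZMod 2) :
    Matrix (Fin N → ZMod 2) (Fin N → ZMod 2) ℝ :=
  Matrix.diagonal (dVec N μ)

lemma dVec_sq (N : ℕ) (μ ν : Fin N → ZMod 2) : (dVec N μ ν) ^ 2 = 1 := by
  rw [dVec, ← pow_mul, mul_comm, pow_mul, neg_one_sq, one_pow]

lemma dVec_zero (N : ℕ) (μ : Fin N → ZMod 2) : dVec N μ 0 = 1 := by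
  simp [dVec]

/-- Product effects on the entangled states `φ_μ`: for unit vectors `α, β ∈ ℝ^{2^N−1}`
(encoded as vectors on `{0,1}^N` vanishing at the index `0`, with `e_α = (1/2)(1,α)`),
`(e_α ⊗ e_β) · φ_μ = (1/4)(1 + α · T̂_μ β)` lies in `[0, 1/2]`; moreover
`(u ⊗ u) · φ_μ = 1`, so `φ_μ` lies in the maximal tensor product. -/
theorem stmt9 (N : ℕ) (μ : Fin N → ZMod 2) (α β : (Fin N → ZMod 2) → ℝ)
    (hα0 : α 0 = 0) (hβ0 : β 0 = 0)
    (hα : ∑ ν, (α ν) ^ 2 = 1) (hβ : ∑ ν, (β ν) ^ 2 = 1) :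
    (∑ j, ∑ k, (if j = 0 then (1 : ℝ) / 2 else α j / 2) * phiMat N μ j k *
        (if k = 0 then (1 : ℝ) / 2 else β k / 2)) =
      (1 / 4) * (1 + ∑ ν, α ν * (dVec N μ ν * β ν)) ∧
    0 ≤ (1 / 4) * (1 + ∑ ν, α ν * (dVec N μ ν * β ν)) ∧
    (1 / 4) * (1 + ∑ ν, α ν * (dVec N μ ν * β ν)) ≤ 1 / 2 ∧
    (∑ j, ∑ k, (if j = 0 then (1 : ℝ) else 0) * phiMat N μ j k *
        (if k = 0 then (1 : ℝ) else 0)) = 1 := by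
  set S := ∑ ν, α ν * (dVec N μ ν * β ν) with hS
  have hd := dVec_sq N μ
  -- bounds on S
  have hplus : 0 ≤ 2 + 2 * S := by
    have h := Finset.sum_nonneg
      (fun ν _ => sq_nonneg (α ν + dVec N μ ν * β ν)) (s := Finset.univ)
    have he : ∑ ν, (α ν + dVec N μ ν * β ν) ^ 2
        = ∑ ν, ((α ν) ^ 2 + 2 * (α ν * (dVec N μ ν * β ν)) + (β ν) ^ 2) :=
      Finset.sum_congr rfl fun ν _ => by linear_combination (β ν) ^ 2 * hd ν
    rw [he, Finset.sum_add_distrib, Finset.sum_add_distrib, ← Finset.mul_sum, hα, hβ] at h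
    linarith
  have hminus : 0 ≤ 2 - 2 * S := by
    have h := Finset.sum_nonneg
      (fun ν _ => sq_nonneg (α ν - dVec N μ ν * β ν)) (s := Finset.univ)
    have he : ∑ ν, (α ν - dVec N μ ν * β ν) ^ 2
        = ∑ ν, ((α ν) ^ 2 - 2 * (α ν * (dVec N μ ν * β ν)) + (β ν) ^ 2) :=
      Finset.sum_congr rfl fun ν _ => by linear_combination (β ν) ^ 2 * hd ν
    rw [he] at h
    simp only [Finset.sum_add_distrib, Finset.sum_sub_distrib, ← Finset.mul_sum, hα, hβ] at h
    linarith
  refine ⟨?_, by linarith, by linarith, ?_⟩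
  · have hdiag : ∀ j : Fin N → ZMod 2,
        (∑ k, (if j = 0 then (1 : ℝ) / 2 else α j / 2) * phiMat N μ j k *
          (if k = 0 then (1 : ℝ) / 2 else β k / 2))
        = (if j = 0 then (1 : ℝ) / 2 else α j / 2) * dVec N μ j *
          (if j = 0 then (1 : ℝ) / 2 else β j / 2) := by
      intro j
      rw [Finset.sum_eq_single j]
      · simp [phiMat, Matrix.diagonal]
      · intro k _ hk
        simp [phiMat, Matrix.diagonal_apply_ne _ (Ne.symm hk)]
      · simp
    simp only [hdiag]
    rw [Finset.sum_eq_add_sum_sdiff_singleton_of_mem (Finset.mem_univ (0 : Fin N → ZMod 2))]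
    have h2 : ∑ j ∈ Finset.univ \ {(0 : Fin N → ZMod 2)},
        (if j = 0 then (1 : ℝ) / 2 else α j / 2) * dVec N μ j *
          (if j = 0 then (1 : ℝ) / 2 else β j / 2)
        = ∑ j ∈ Finset.univ \ {(0 : Fin N → ZMod 2)}, (1 / 4) * (α j * (dVec N μ j * β j)) := by
      refine Finset.sum_congr rfl fun j hj => ?_
      rw [Finset.mem_sdiff, Finset.mem_singleton] at hj
      simp only [if_neg hj.2]; ring
    rw [h2, if_pos rfl, dVec_zero]
    have h3 : ∑ j ∈ Finset.univ \ {(0 : Fin N → ZMod 2)},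
        (1 / 4 : ℝ) * (α j * (dVec N μ j * β j))
        = ∑ j, (1 / 4 : ℝ) * (α j * (dVec N μ j * β j)) := by
      rw [Finset.sum_eq_add_sum_sdiff_singleton_of_mem (Finset.mem_univ (0 : Fin N → ZMod 2))
        (f := fun j => (1 / 4 : ℝ) * (α j * (dVec N μ j * β j))), hα0]
      ring
    rw [h3, ← Finset.mul_sum, ← hS]; norm_num; ring
  · have hdiag : ∀ j : Fin N → ZMod 2,
        (∑ k, (if j = 0 then (1 : ℝ) else 0) * phiMat N μ j k *
          (if k = 0 then (1 : ℝ) else 0))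
        = (if j = 0 then (1 : ℝ) else 0) * dVec N μ j * (if j = 0 then (1 : ℝ) else 0) := by
      intro j
      rw [Finset.sum_eq_single j]
      · simp [phiMat, Matrix.diagonal]
      · intro k _ hk
        simp [phiMat, Matrix.diagonal_apply_ne _ (Ne.symm hk)]
      · simp
    simp only [hdiag]
    rw [Finset.sum_eq_single (0 : Fin N → ZMod 2)]
    · simp [dVec_zero]
    · intro k _ hk; simp [hk]
    · simp
end

section
/- In the hyperdense coding protocol: starting from φ_0 = I (identity matrix in ℝ^{2^N}⊗ℝ^{2^N}), applying the local transformation T_x = diag(d_x) gives T_x φ_0 = φ_x, and measuring with {E_y = 2^{-N} φ_y} yields p(y|x) = δ_{y,x}. Consequently, for a uniform distribution over x ∈ {0,1}^N, the mutual information I(X:Y) = N. -/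
open Matrix

lemma neg_pow_val_add (a b : ZMod 2) :
    (-1 : ℝ) ^ a.val * (-1 : ℝ) ^ b.val = (-1 : ℝ) ^ (a + b).val := by
  have : ((a + b).val) % 2 = (a.val + b.val) % 2 := by
    rw [ZMod.val_add]; omega
  rw [← pow_add, neg_one_pow_eq_pow_mod_two, neg_one_pow_eq_pow_mod_two (n := (a+b).val), this]

lemma neg_pow_val_add_one (a : ZMod 2) :
    (-1 : ℝ) ^ (a + 1).val = -((-1 : ℝ) ^ a.val) := by
  have h := neg_pow_val_add a 1
  have h1 : ((1 : ZMod 2)).val = 1 := rfl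
  rw [h1] at h
  rw [← h]; ring

lemma key_sum (N : ℕ) (c : Fin N → ZMod 2) :
    ∑ ν : Fin N → ZMod 2, (-1 : ℝ) ^ (∑ l, c l * ν l : ZMod 2).val
      = if c = 0 then (2 : ℝ) ^ N else 0 := by
  by_cases hc : c = 0
  · subst hc; simp [ZMod.val_zero]
  · simp only [if_neg hc]
    obtain ⟨l0, hl0⟩ : ∃ l, c l ≠ 0 := by
      by_contra h; push_neg at h; exact hc (funext h)
    have hc1 : c l0 = 1 := by
      revert hl0; generalize c l0 = a; revert a; decide
    set g : (Fin N → ZMod 2) → (Fin N → ZMod 2) := fun ν => ν + Pi.single l0 1 with hg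
    refine Finset.sum_involution (fun ν _ => g ν) ?_ ?_ (fun _ _ => Finset.mem_univ _) ?_
    · intro ν _
      have hsum : (∑ l, c l * (g ν) l) = (∑ l, c l * ν l) + 1 := by
        have : ∀ l, c l * (g ν) l = c l * ν l + c l * (Pi.single l0 (1:ZMod 2) : Fin N → ZMod 2) l := by
          intro l; simp [hg, mul_add]
        rw [Finset.sum_congr rfl (fun l _ => this l), Finset.sum_add_distrib]
        congr 1
        rw [Finset.sum_eq_single l0]
        · simp [hc1]
        · intro b _ hb; simp [Pi.single_apply, hb]
        · simp
      rw [hsum, neg_pow_val_add_one]; ring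
    · intro ν _ _
      intro h
      have := congrFun h l0
      simp [hg, Pi.single_apply] at this
    · intro ν _
      funext l
      simp only [hg, Pi.add_apply, Pi.single_apply]
      by_cases hl : l = l0
      · simp only [hl, if_pos rfl, if_true]
        have h1 : (1 : ZMod 2) + 1 = 0 := rfl
        rw [add_assoc, h1, add_zero]
      · simp [hl]

/-- Hyperdense coding protocol: applying `T_x = diag(d_x)` to `φ_0 = I` gives `φ_x`,
measuring with `E_y = 2^{-N} φ_y` yields `p(y|x) = δ_{y,x}`, and for a uniform input
distribution over `{0,1}^N` the mutual information equals `N` bits. -/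
theorem stmt10 (N : ℕ) :
    (∀ x : Fin N → ZMod 2, phiMat N x * (1 : Matrix _ _ ℝ) = phiMat N x) ∧
    (∀ x y : Fin N → ZMod 2,
      Matrix.trace ((((2 : ℝ) ^ N)⁻¹ • phiMat N y)ᵀ *
        (phiMat N x * (1 : Matrix _ _ ℝ))) = if y = x then 1 else 0) ∧
    mutInfo (fun _ : Fin N → ZMod 2 => ((2 : ℝ) ^ N)⁻¹)
      (fun x y => if y = x then (1 : ℝ) else 0) = N := by
  refine ⟨fun x => mul_one _, ?_, ?_⟩
  · intro x y
    rw [mul_one]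
    unfold phiMat
    rw [Matrix.transpose_smul, Matrix.diagonal_transpose, Matrix.smul_mul,
      Matrix.diagonal_mul_diagonal, Matrix.trace_smul, Matrix.trace_diagonal]
    have hsum : ∑ ν, dVec N y ν * dVec N x ν
        = ∑ ν : Fin N → ZMod 2, (-1 : ℝ) ^ (∑ l, (y + x) l * ν l : ZMod 2).val := by
      refine Finset.sum_congr rfl fun ν _ => ?_
      unfold dVec
      rw [neg_pow_val_add]
      have hexp : (∑ l, y l * ν l) + (∑ l, x l * ν l) = ∑ l, (y + x) l * ν l := by
        rw [← Finset.sum_add_distrib]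
        exact Finset.sum_congr rfl fun l _ => by simp [add_mul]
      rw [hexp]
    rw [hsum, key_sum]
    have heq : (y + x = 0) ↔ (y = x) := by
      constructor
      · intro h; funext l
        have h2 := congrFun h l
        simp only [Pi.add_apply, Pi.zero_apply] at h2
        revert h2; generalize y l = a; generalize x l = b; revert a b; decide
      · intro h; subst h; funext l
        simp only [Pi.add_apply, Pi.zero_apply]
        generalize y l = a; revert a; decide
    by_cases h : y = x
    · rw [if_pos (heq.2 h), if_pos h, smul_eq_mul, inv_mul_cancel₀ (by positivity)]
    · rw [if_neg (fun hh => h (heq.1 hh)), if_neg h, smul_zero]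
  · unfold mutInfo
    have hcard : (Fintype.card (Fin N → ZMod 2) : ℝ) = 2 ^ N := by
      simp [Fintype.card_fun]
    have hinner : ∀ x : Fin N → ZMod 2,
        (∑ y : Fin N → ZMod 2, ((2:ℝ)^N)⁻¹ * (if y = x then (1:ℝ) else 0) *
          Real.logb 2 ((if y = x then (1:ℝ) else 0) /
            (∑ x' : Fin N → ZMod 2, ((2:ℝ)^N)⁻¹ * (if y = x' then (1:ℝ) else 0))))
        = ((2:ℝ)^N)⁻¹ * N := by
      intro x
      rw [Finset.sum_eq_single x]
      · have hden : (∑ x' : Fin N → ZMod 2, ((2:ℝ)^N)⁻¹ * (if x = x' then (1:ℝ) else 0))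
            = ((2:ℝ)^N)⁻¹ := by
          simp [Finset.sum_ite_eq]
        rw [if_pos rfl, hden, mul_one, one_div, inv_inv]
        congr 1
        simp [Real.logb_pow]
      · intro y _ hy
        rw [if_neg hy]; ring
      · simp
    calc (∑ x : Fin N → ZMod 2, ∑ y : Fin N → ZMod 2, ((2:ℝ)^N)⁻¹ * (if y = x then (1:ℝ) else 0) *
          Real.logb 2 ((if y = x then (1:ℝ) else 0) /
            (∑ x' : Fin N → ZMod 2, ((2:ℝ)^N)⁻¹ * (if y = x' then (1:ℝ) else 0))))
        = ∑ x : Fin N → ZMod 2, ((2:ℝ)^N)⁻¹ * N := Finset.sum_congr rfl fun x _ => hinner x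
      _ = (2:ℝ)^N * (((2:ℝ)^N)⁻¹ * N) := by rw [Finset.sum_const, nsmul_eq_mul, Finset.card_univ, hcard]
      _ = N := by field_simp
end

section
/- Suppose for a bipartite hypersphere theory with local dimension n that for all orthogonal matrices T̂, T̂' in the allowed group 𝒯̂ one has 1 + α·(T̂a) + β·(T̂'b) + Γ·(T̂ C T̂'ᵗ) ≥ 0. If a = 0 and 𝒯̂ = SO(n) with n odd, then χ := β·b + Γ·C satisfies χ ≤ 1/(1 − 2/n) ≤ 3, with the second inequality an equality only when n = 3. -/
open Matrix

lemma sum_sign (n : ℕ) (k : Fin n) (x : Fin n → ℝ) :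
    ∑ j, (if j = k then (1:ℝ) else -1) * x j = 2 * x k - ∑ j, x j := by
  have : ∀ j, (if j = k then (1:ℝ) else -1) * x j
      = 2 * (if j = k then x j else 0) - x j := by
    intro j; by_cases hj : j = k <;> simp [hj] <;> ring
  simp only [this, Finset.sum_sub_distrib, ← Finset.mul_sum, Finset.sum_ite_eq]
  simp

/-- For a bipartite hypersphere state/effect pair with `a = 0` and allowed local
transformation group `SO(n)` with `n` odd: if
`1 + α·(T̂a) + β·(T̂'b) + Γ·(T̂ C T̂'ᵗ) ≥ 0` for all `T̂, T̂' ∈ SO(n)`, then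
`χ = β·b + Γ·C` satisfies `χ ≤ 1/(1 − 2/n) ≤ 3`, with the second inequality an
equality only when `n = 3`. -/
theorem stmt16 (n : ℕ) (hn : 2 ≤ n) (hodd : Odd n)
    (a b α β : Fin n → ℝ) (C Γ : Matrix (Fin n) (Fin n) ℝ)
    (ha : a = 0)
    (h : ∀ T T' : Matrix (Fin n) (Fin n) ℝ,
      Tᵀ * T = 1 → T.det = 1 → T'ᵀ * T' = 1 → T'.det = 1 →
      0 ≤ 1 + (∑ i, α i * (T *ᵥ a) i) + (∑ j, β j * (T' *ᵥ b) j) +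
        Matrix.trace (Γᵀ * (T * C * T'ᵀ))) :
    (∑ j, β j * b j) + Matrix.trace (Γᵀ * C) ≤ (1 - 2 / (n : ℝ))⁻¹ ∧
    (1 - 2 / (n : ℝ))⁻¹ ≤ 3 ∧
    ((1 - 2 / (n : ℝ))⁻¹ = 3 → n = 3) := by
  have hn3 : 3 ≤ n := by
    rcases Nat.lt_or_ge n 3 with h3 | h3
    · interval_cases n
      · exact absurd hodd (by decide)
    · exact h3
  have hnpos : (0:ℝ) < n := by positivity
  have hn2 : (0:ℝ) < (n:ℝ) - 2 := by
    have : (3:ℝ) ≤ n := by exact_mod_cast hn3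
    linarith
  -- key inequality for each k
  set B : ℝ := ∑ j, β j * b j with hB
  set Tr : ℝ := Matrix.trace (Γᵀ * C) with hTr
  have key : ∀ k : Fin n,
      0 ≤ 1 + (2 * (β k * b k) - B) + (2 * ((Γᵀ * C) k k) - Tr) := by
    intro k
    set d : Fin n → ℝ := fun j => if j = k then 1 else -1 with hd
    have hdsq : ∀ i, d i * d i = 1 := by
      intro i; by_cases hi : i = k <;> simp [hd, hi]
    set Q : Matrix (Fin n) (Fin n) ℝ := Matrix.diagonal d with hQ
    have hQT : Qᵀ = Q := Matrix.diagonal_transpose d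
    have hQorth : Qᵀ * Q = 1 := by
      rw [hQT, hQ, Matrix.diagonal_mul_diagonal]
      simp only [hdsq]
      exact Matrix.diagonal_one
    have hQdet : Q.det = 1 := by
      rw [hQ, Matrix.det_diagonal]
      rw [← Finset.mul_prod_erase Finset.univ d (Finset.mem_univ k)]
      have h1 : d k = 1 := by simp [hd]
      have h2 : ∏ i ∈ Finset.univ.erase k, d i
          = (-1 : ℝ) ^ ((Finset.univ.erase k).card) := by
        rw [← Finset.prod_const]
        apply Finset.prod_congr rfl
        intro i hi
        simp [hd, Finset.mem_erase.mp hi |>.1]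
      rw [h1, h2, one_mul]
      have hcard : (Finset.univ.erase k).card = n - 1 := by
        simp [Finset.card_erase_of_mem]
      rw [hcard]
      exact Even.neg_one_pow (Nat.Odd.sub_odd hodd odd_one)
    have := h 1 Q (by simp) (by simp) hQorth hQdet
    rw [ha] at this
    simp only [Matrix.mulVec_zero, Pi.zero_apply, mul_zero, Finset.sum_const_zero,
      add_zero, Matrix.one_mul, hQT] at this
    have hb : ∑ j, β j * (Q *ᵥ b) j = 2 * (β k * b k) - B := by
      have : ∀ j, β j * (Q *ᵥ b) j = d j * (β j * b j) := by
        intro j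
        rw [hQ, Matrix.mulVec_diagonal]; ring
      simp only [this]
      exact sum_sign n k (fun j => β j * b j)
    have htr : Matrix.trace (Γᵀ * (C * Q)) = 2 * ((Γᵀ * C) k k) - Tr := by
      rw [← Matrix.mul_assoc]
      rw [Matrix.trace]
      have : ∀ i, ((Γᵀ * C) * Q) i i = d i * ((Γᵀ * C) i i) := by
        intro i
        rw [hQ, Matrix.mul_diagonal]; ring
      simp only [Matrix.diag_apply, this]
      rw [sum_sign n k (fun i => (Γᵀ * C) i i)]
      rfl
    rw [hb, htr] at this
    linarith
  -- sum over k
  have hsum := Finset.sum_nonneg (fun k (_ : k ∈ Finset.univ) => key k)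
  have hexp : ∑ k : Fin n, (1 + (2 * (β k * b k) - B) + (2 * ((Γᵀ * C) k k) - Tr))
      = n * (1 - B - Tr) + 2 * B + 2 * Tr := by
    simp only [Finset.sum_add_distrib, Finset.sum_sub_distrib, Finset.sum_const,
      Finset.card_univ, Fintype.card_fin, nsmul_eq_mul, ← Finset.mul_sum]
    have : ∑ k : Fin n, (Γᵀ * C) k k = Tr := rfl
    rw [this, ← hB]
    ring
  rw [hexp] at hsum
  have hS : B + Tr ≤ (n:ℝ) / ((n:ℝ) - 2) := by
    rw [le_div_iff₀ hn2]
    nlinarith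
  have hinv : (1 - 2 / (n : ℝ))⁻¹ = (n:ℝ) / ((n:ℝ) - 2) := by
    rw [eq_div_iff (by linarith)]
    field_simp
  refine ⟨by rw [hinv]; exact hS, ?_, ?_⟩
  · rw [hinv, div_le_iff₀ hn2]
    have : (3:ℝ) ≤ n := by exact_mod_cast hn3
    linarith
  · intro heq
    rw [hinv] at heq
    have : (n:ℝ) = 3 * ((n:ℝ) - 2) := by
      field_simp at heq
      linarith
    have : (n:ℝ) = 3 := by linarith
    exact_mod_cast this
end

section
/- Teleportation correctness in hypersphere theories: for the diagonal entangled state φ_x = diag(d_x), effect E_x = 2^{-N} φ_x, any input state ω_a ∈ ℝ^{2^N} and any local effect e_y ∈ ℝ^{2^N}, the joint probability p(x,y) = ∑_{i,j,k} (E_x)_{i,j} (e_y)_k (ω_a)_i (φ_x)_{j,k} equals 2^{-N} (e_y · ω_a). Hence conditioned on Alice's outcome x (which occurs with probability 2^{-N}), Bob's outcome distribution is e_y · ω_a, i.e., the state ω_a is perfectly teleported. -/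
lemma key (N : ℕ) (x : Fin N → ZMod 2) (ωa ey : (Fin N → ZMod 2) → ℝ) :
    (∑ i, ∑ j, ∑ k, (((2 : ℝ) ^ N)⁻¹ * phiMat N x i j) * ey k * ωa i * phiMat N x j k)
      = ((2 : ℝ) ^ N)⁻¹ * ∑ k, ey k * ωa k := by
  rw [Finset.mul_sum]
  apply Finset.sum_congr rfl
  intro i _
  rw [Finset.sum_eq_single i, Finset.sum_eq_single i]
  · simp only [phiMat, Matrix.diagonal_apply_eq]
    have h : dVec N x i ^ 2 = 1 := by
      rw [dVec, ← pow_mul, pow_mul', neg_one_sq, one_pow]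
    ring_nf
    rw [h, mul_one]
  · intro k _ hk
    simp [phiMat, Matrix.diagonal_apply_ne' _ hk]
  · simp
  · intro j _ hj
    simp [phiMat, Matrix.diagonal_apply_ne' _ hj]
  · simp

/-- Teleportation correctness: for the entangled state `φ_x = diag(d_x)`, effect
`E_x = 2^{-N} φ_x`, input state `ω_a` and local effect `e_y`, the joint probability
`p(x,y) = ∑_{i,j,k} (E_x)_{ij} (e_y)_k (ω_a)_i (φ_x)_{jk}` equals `2^{-N}(e_y·ω_a)`;
hence conditioned on Alice's outcome `x` (probability `2^{-N}`), Bob's outcome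
distribution is `e_y · ω_a`. -/
theorem stmt19 (N : ℕ) (x : Fin N → ZMod 2)
    (ωa ey : (Fin N → ZMod 2) → ℝ) :
    (∑ i, ∑ j, ∑ k, (((2 : ℝ) ^ N)⁻¹ * phiMat N x i j) * ey k * ωa i * phiMat N x j k)
      = ((2 : ℝ) ^ N)⁻¹ * ∑ k, ey k * ωa k ∧
    (((2 : ℝ) ^ N)⁻¹)⁻¹ *
      (∑ i, ∑ j, ∑ k, (((2 : ℝ) ^ N)⁻¹ * phiMat N x i j) * ey k * ωa i * phiMat N x j k)
      = ∑ k, ey k * ωa k := by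
  have h := key N x ωa ey
  refine ⟨h, ?_⟩
  rw [h, ← mul_assoc, inv_inv, mul_inv_cancel₀ (by positivity), one_mul]
end
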